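/- Fix an integer n ≥ 3, ω₀ > 0, γ > 0, T₋ > 0 and a real number ℱ. Define, for smooth functions F : ℝ^{n+1} × ℝ^{n+1} → ℝ of variables (q, p) = (q₀,…,q_n, p₀,…,p_n): the operator 𝒜F = Σ_{x=0}^n p_x ∂_{q_x}F + Σ_{x=0}^n ((Δ_N q)_x − ω₀² q_x) ∂_{p_x}F + ℱ ∂_{p_n}F; the flip operator S_flip F(q, p) = Σ_{x=1}^n (F(q, p^x) − F(q, p)), where p^x is p with the sign of the x-th coordinate reversed; the operator S₋F = T₋ ∂²_{p₀}F − p₀ ∂_{p₀}F; and 𝒢 = 𝒜 + γ S_flip + 2γ S₋. Define 𝔣_x = (1/(4γ))(q_{x+1} − q_x)(p_x + p_{x+1}) + (1/4)(q_{x+1} − q_x)², 𝔉_x = p_x² + (q_{x+1} − q_x)(q_x − q_{x−1}) − ω₀² q_x² (with the conventions q_{−1} = q₀ and q_{n+1} = q_n), and j_{x,x+1} = −p_x (q_{x+1} − q_x). Then for every x with 1 ≤ x ≤ n − 2, the fluctuation–dissipation identity 𝒢 𝔣_x = (1/(4γ))(𝔉_{x+1} − 𝔉_x) + j_{x,x+1}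 holds pointwise on ℝ^{2(n+1)}. -/

import Mathlib

open Real

noncomputable section

/-- The discrete Neumann Laplacian on `{0,…,n}`:
`(Δ_N f)_x = f_{x+1} + f_{x−1} − 2 f_x` with the conventions `f_{−1} := f₀`, `f_{n+1} := f_n`. -/
def neumannLap (n : ℕ) (f : ℕ → ℝ) (x : ℕ) : ℝ :=
  (if x = n then f x else f (x + 1)) + (if x = 0 then f x else f (x - 1)) - 2 * f x

/-- Partial derivative `∂_{q_x} F` at the configuration `(q, p)`. -/
def dq (F : (ℕ → ℝ) × (ℕ → ℝ) → ℝ) (x : ℕ) (qp : (ℕ → ℝ) × (ℕ → ℝ)) : ℝ :=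
  deriv (fun t => F (Function.update qp.1 x t, qp.2)) (qp.1 x)

/-- Partial derivative `∂_{p_x} F` at the configuration `(q, p)`. -/
def dp (F : (ℕ → ℝ) × (ℕ → ℝ) → ℝ) (x : ℕ) (qp : (ℕ → ℝ) × (ℕ → ℝ)) : ℝ :=
  deriv (fun t => F (qp.1, Function.update qp.2 x t)) (qp.2 x)

/-- Second partial derivative `∂²_{p_x} F` at the configuration `(q, p)`. -/
def dpp (F : (ℕ → ℝ) × (ℕ → ℝ) → ℝ) (x : ℕ) (qp : (ℕ → ℝ) × (ℕ → ℝ)) : ℝ :=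
  deriv (fun t => deriv (fun s => F (qp.1, Function.update qp.2 x s)) t) (qp.2 x)

/-- The Hamiltonian (transport) part `𝒜` of the generator, with constant forcing `𝓕` acting on
the momentum of the right-most particle `x = n`. -/
def genA (n : ℕ) (ω₀ 𝓕 : ℝ) (F : (ℕ → ℝ) × (ℕ → ℝ) → ℝ) (qp : (ℕ → ℝ) × (ℕ → ℝ)) : ℝ :=
  (∑ x ∈ Finset.range (n + 1), qp.2 x * dq F x qp)
    + (∑ x ∈ Finset.range (n + 1), (neumannLap n qp.1 x - ω₀ ^ 2 * qp.1 x) * dp F x qp)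
    + 𝓕 * dp F n qp

/-- The velocity flip operator `S_flip F(q,p) = Σ_{x=1}^n (F(q, p^x) − F(q, p))`, where `p^x`
is `p` with the sign of the `x`-th coordinate reversed. -/
def sFlip (n : ℕ) (F : (ℕ → ℝ) × (ℕ → ℝ) → ℝ) (qp : (ℕ → ℝ) × (ℕ → ℝ)) : ℝ :=
  ∑ x ∈ Finset.Icc 1 n, (F (qp.1, Function.update qp.2 x (-(qp.2 x))) - F qp)

/-- The Langevin thermostat operator `S₋ F = Tm ∂²_{p₀} F − p₀ ∂_{p₀} F`. -/
def sMinus (Tm : ℝ) (F : (ℕ → ℝ) × (ℕ → ℝ) → ℝ) (qp : (ℕ → ℝ) × (ℕ → ℝ)) : ℝ :=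
  Tm * dpp F 0 qp - qp.2 0 * dp F 0 qp

/-- The full generator `𝒢 = 𝒜 + γ S_flip + 2γ S₋`. -/
def gen (n : ℕ) (ω₀ γ Tm 𝓕 : ℝ) (F : (ℕ → ℝ) × (ℕ → ℝ) → ℝ)
    (qp : (ℕ → ℝ) × (ℕ → ℝ)) : ℝ :=
  genA n ω₀ 𝓕 F qp + γ * sFlip n F qp + 2 * γ * sMinus Tm F qp

/-- The fluctuation–dissipation corrector
`𝔣_x = (1/(4γ))(q_{x+1} − q_x)(p_x + p_{x+1}) + (1/4)(q_{x+1} − q_x)²`. -/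
def corrSmallF (γ : ℝ) (x : ℕ) (qp : (ℕ → ℝ) × (ℕ → ℝ)) : ℝ :=
  (1 / (4 * γ)) * (qp.1 (x + 1) - qp.1 x) * (qp.2 x + qp.2 (x + 1))
    + (1 / 4) * (qp.1 (x + 1) - qp.1 x) ^ 2

/-- `𝔉_x = p_x² + (q_{x+1} − q_x)(q_x − q_{x−1}) − ω₀² q_x²`, with the conventions
`q_{−1} = q₀` and `q_{n+1} = q_n`. -/
def corrBigF (n : ℕ) (ω₀ : ℝ) (x : ℕ) (qp : (ℕ → ℝ) × (ℕ → ℝ)) : ℝ :=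
  qp.2 x ^ 2
    + ((if x = n then qp.1 x else qp.1 (x + 1)) - qp.1 x) *
        (qp.1 x - (if x = 0 then qp.1 x else qp.1 (x - 1)))
    - ω₀ ^ 2 * qp.1 x ^ 2

/-- The microscopic energy current `j_{x,x+1} = −p_x (q_{x+1} − q_x)`. -/
def curr (x : ℕ) (qp : (ℕ → ℝ) × (ℕ → ℝ)) : ℝ :=
  -(qp.2 x) * (qp.1 (x + 1) - qp.1 x)


private lemma fd_hasDerivAt_quad (A B C t : ℝ) :
    HasDerivAt (fun s : ℝ => A * s ^ 2 + B * s + C) (2 * A * t + B) t := by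
  have h1 : HasDerivAt (fun s : ℝ => s ^ 2) (2 * t) t := by
    simpa using hasDerivAt_pow 2 t
  have h2 := ((h1.const_mul A).add ((hasDerivAt_id t).const_mul B)).add_const C
  exact h2.congr_deriv (by ring)

private lemma fd_deriv_quad (A B C t : ℝ) :
    deriv (fun s : ℝ => A * s ^ 2 + B * s + C) t = 2 * A * t + B :=
  (fd_hasDerivAt_quad A B C t).deriv

private lemma fd_dq (γ : ℝ) (x y : ℕ) (qp : (ℕ → ℝ) × (ℕ → ℝ)) :
    dq (corrSmallF γ x) y qp =
      (if y = x then
          -(1/(4*γ) * (qp.2 x + qp.2 (x+1))) - (1/2) * (qp.1 (x+1) - qp.1 x) else 0)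
      + (if y = x + 1 then
          1/(4*γ) * (qp.2 x + qp.2 (x+1)) + (1/2) * (qp.1 (x+1) - qp.1 x) else 0) := by
  unfold dq corrSmallF
  by_cases h1 : y = x
  · rw [h1]
    simp only [Function.update_self, Function.update_of_ne (show x+1 ≠ x by omega)]
    have key : (fun t : ℝ => 1/(4*γ) * (qp.1 (x+1) - t) * (qp.2 x + qp.2 (x+1))
        + 1/4 * (qp.1 (x+1) - t)^2)
        = fun t : ℝ => (1/4) * t^2
          + (-(1/(4*γ) * (qp.2 x + qp.2 (x+1))) - (1/2) * qp.1 (x+1)) * t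
          + (1/(4*γ) * qp.1 (x+1) * (qp.2 x + qp.2 (x+1)) + (1/4) * qp.1 (x+1)^2) := by
      funext t; ring
    rw [key, fd_deriv_quad]
    simp [show x ≠ x + 1 by omega]
    ring
  · by_cases h2 : y = x + 1
    · rw [h2]
      simp only [Function.update_self, Function.update_of_ne (show x ≠ x+1 by omega)]
      have key : (fun t : ℝ => 1/(4*γ) * (t - qp.1 x) * (qp.2 x + qp.2 (x+1))
          + 1/4 * (t - qp.1 x)^2)
          = fun t : ℝ => (1/4) * t^2
            + (1/(4*γ) * (qp.2 x + qp.2 (x+1)) - (1/2) * qp.1 x) * t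
            + (-(1/(4*γ) * qp.1 x * (qp.2 x + qp.2 (x+1))) + (1/4) * qp.1 x^2) := by
        funext t; ring
      rw [key, fd_deriv_quad]
      simp [show x + 1 ≠ x by omega]
      ring
    · simp only [Function.update_of_ne (show x+1 ≠ y from fun h => h2 h.symm),
        Function.update_of_ne (show x ≠ y from fun h => h1 h.symm)]
      simp [h1, h2]

private lemma fd_dp (γ : ℝ) (x y : ℕ) (qp : (ℕ → ℝ) × (ℕ → ℝ)) :
    dp (corrSmallF γ x) y qp =
      if y = x ∨ y = x + 1 then 1/(4*γ) * (qp.1 (x+1) - qp.1 x) else 0 := by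
  unfold dp corrSmallF
  by_cases h1 : y = x
  · rw [h1]
    simp only [Function.update_self, Function.update_of_ne (show x+1 ≠ x by omega)]
    have key : (fun t : ℝ => 1/(4*γ) * (qp.1 (x+1) - qp.1 x) * (t + qp.2 (x+1))
        + 1/4 * (qp.1 (x+1) - qp.1 x)^2)
        = fun t : ℝ => (0:ℝ) * t^2 + (1/(4*γ) * (qp.1 (x+1) - qp.1 x)) * t
          + (1/(4*γ) * (qp.1 (x+1) - qp.1 x) * qp.2 (x+1)
             + 1/4 * (qp.1 (x+1) - qp.1 x)^2) := by
      funext t; ring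
    rw [key, fd_deriv_quad]
    simp
  · by_cases h2 : y = x + 1
    · rw [h2]
      simp only [Function.update_self, Function.update_of_ne (show x ≠ x+1 by omega)]
      have key : (fun t : ℝ => 1/(4*γ) * (qp.1 (x+1) - qp.1 x) * (qp.2 x + t)
          + 1/4 * (qp.1 (x+1) - qp.1 x)^2)
          = fun t : ℝ => (0:ℝ) * t^2 + (1/(4*γ) * (qp.1 (x+1) - qp.1 x)) * t
            + (1/(4*γ) * (qp.1 (x+1) - qp.1 x) * qp.2 x
               + 1/4 * (qp.1 (x+1) - qp.1 x)^2) := by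
        funext t; ring
      rw [key, fd_deriv_quad]
      simp
    · simp only [Function.update_of_ne (show x+1 ≠ y from fun h => h2 h.symm),
        Function.update_of_ne (show x ≠ y from fun h => h1 h.symm)]
      simp [h1, h2]

private lemma fd_dpp0 (γ : ℝ) (x : ℕ) (hx : 1 ≤ x) (qp : (ℕ → ℝ) × (ℕ → ℝ)) :
    dpp (corrSmallF γ x) 0 qp = 0 := by
  unfold dpp
  have h : ∀ t : ℝ, deriv (fun s => corrSmallF γ x (qp.1, Function.update qp.2 0 s)) t = 0 := by
    intro t
    have : (fun s : ℝ => corrSmallF γ x (qp.1, Function.update qp.2 0 s))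
        = fun _ => corrSmallF γ x qp := by
      funext s
      simp [corrSmallF, Function.update_of_ne (show x ≠ 0 by omega),
        Function.update_of_ne (show x + 1 ≠ 0 by omega)]
    rw [this]
    exact deriv_const t _
  simp only [h]
  exact deriv_const _ _

/-- The fluctuation–dissipation identity
`𝒢 𝔣_x = (1/(4γ))(𝔉_{x+1} − 𝔉_x) + j_{x,x+1}` holds pointwise on `ℝ^{2(n+1)}`
for every bulk site `1 ≤ x ≤ n − 2`. -/
theorem fluctuation_dissipation (n : ℕ) (hn : 3 ≤ n) (ω₀ γ Tm 𝓕 : ℝ)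
    (hω : 0 < ω₀) (hγ : 0 < γ) (hT : 0 < Tm)
    (x : ℕ) (hx1 : 1 ≤ x) (hx2 : x ≤ n - 2) (qp : (ℕ → ℝ) × (ℕ → ℝ)) :
    gen n ω₀ γ Tm 𝓕 (corrSmallF γ x) qp
      = (1 / (4 * γ)) * (corrBigF n ω₀ (x + 1) qp - corrBigF n ω₀ x qp) + curr x qp := by
  have hxn : x + 2 ≤ n := by omega
  have hsum1 : (∑ y ∈ Finset.range (n+1), qp.2 y * dq (corrSmallF γ x) y qp)
      = qp.2 x * (-(1/(4*γ) * (qp.2 x + qp.2 (x+1))) - (1/2) * (qp.1 (x+1) - qp.1 x))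
        + qp.2 (x+1) * (1/(4*γ) * (qp.2 x + qp.2 (x+1)) + (1/2) * (qp.1 (x+1) - qp.1 x)) := by
    have hrw : ∀ y ∈ Finset.range (n+1), qp.2 y * dq (corrSmallF γ x) y qp
        = (if y = x then qp.2 y * (-(1/(4*γ) * (qp.2 x + qp.2 (x+1)))
              - (1/2) * (qp.1 (x+1) - qp.1 x)) else 0)
          + (if y = x+1 then qp.2 y * (1/(4*γ) * (qp.2 x + qp.2 (x+1))
              + (1/2) * (qp.1 (x+1) - qp.1 x)) else 0) := by
      intro y _
      rw [fd_dq]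
      by_cases h1 : y = x
      · rw [h1]
        simp [show x ≠ x + 1 by omega]
        try ring
      · by_cases h2 : y = x+1
        · rw [h2]
          simp [show x + 1 ≠ x by omega]
          try ring
        · simp [h1, h2]
    rw [Finset.sum_congr rfl hrw, Finset.sum_add_distrib,
      Finset.sum_ite_eq' (Finset.range (n+1)) x, Finset.sum_ite_eq' (Finset.range (n+1)) (x+1)]
    simp [Finset.mem_range, show x < n + 1 by omega, show x + 1 < n + 1 by omega]
  have hsum2 : (∑ y ∈ Finset.range (n+1),
        (neumannLap n qp.1 y - ω₀ ^ 2 * qp.1 y) * dp (corrSmallF γ x) y qp)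
      = (neumannLap n qp.1 x - ω₀ ^ 2 * qp.1 x) * (1/(4*γ) * (qp.1 (x+1) - qp.1 x))
        + (neumannLap n qp.1 (x+1) - ω₀ ^ 2 * qp.1 (x+1))
            * (1/(4*γ) * (qp.1 (x+1) - qp.1 x)) := by
    have hrw : ∀ y ∈ Finset.range (n+1),
        (neumannLap n qp.1 y - ω₀ ^ 2 * qp.1 y) * dp (corrSmallF γ x) y qp
        = (if y = x then (neumannLap n qp.1 y - ω₀ ^ 2 * qp.1 y)
              * (1/(4*γ) * (qp.1 (x+1) - qp.1 x)) else 0)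
          + (if y = x+1 then (neumannLap n qp.1 y - ω₀ ^ 2 * qp.1 y)
              * (1/(4*γ) * (qp.1 (x+1) - qp.1 x)) else 0) := by
      intro y _
      rw [fd_dp]
      by_cases h1 : y = x
      · rw [h1]
        simp [show x ≠ x + 1 by omega]
        try ring
      · by_cases h2 : y = x+1
        · rw [h2]
          simp [show x + 1 ≠ x by omega]
          try ring
        · simp [h1, h2]
    rw [Finset.sum_congr rfl hrw, Finset.sum_add_distrib,
      Finset.sum_ite_eq' (Finset.range (n+1)) x, Finset.sum_ite_eq' (Finset.range (n+1)) (x+1)]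
    simp [Finset.mem_range, show x < n + 1 by omega, show x + 1 < n + 1 by omega]
  have hflip : sFlip n (corrSmallF γ x) qp
      = 1/(4*γ) * (qp.1 (x+1) - qp.1 x) * (-2 * qp.2 x)
        + 1/(4*γ) * (qp.1 (x+1) - qp.1 x) * (-2 * qp.2 (x+1)) := by
    unfold sFlip
    have hrw : ∀ y ∈ Finset.Icc 1 n,
        (corrSmallF γ x (qp.1, Function.update qp.2 y (-(qp.2 y))) - corrSmallF γ x qp)
        = (if y = x then 1/(4*γ) * (qp.1 (x+1) - qp.1 x) * (-2 * qp.2 x) else 0)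
          + (if y = x+1 then 1/(4*γ) * (qp.1 (x+1) - qp.1 x) * (-2 * qp.2 (x+1)) else 0) := by
      intro y _
      by_cases h1 : y = x
      · rw [h1]
        simp only [corrSmallF, Function.update_self,
          Function.update_of_ne (show x+1 ≠ x by omega)]
        simp [show x ≠ x + 1 by omega]
        try ring
      · by_cases h2 : y = x+1
        · rw [h2]
          simp only [corrSmallF, Function.update_self,
            Function.update_of_ne (show x ≠ x+1 by omega)]
          simp [show x + 1 ≠ x by omega]
          try ring
        · simp only [corrSmallF, Function.update_of_ne (show x ≠ y from fun h => h1 h.symm),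
            Function.update_of_ne (show x+1 ≠ y from fun h => h2 h.symm),
            if_neg h1, if_neg h2]
          ring
    rw [Finset.sum_congr rfl hrw, Finset.sum_add_distrib,
      Finset.sum_ite_eq' (Finset.Icc 1 n) x, Finset.sum_ite_eq' (Finset.Icc 1 n) (x+1)]
    simp [Finset.mem_Icc, show 1 ≤ x by omega, show x ≤ n by omega, show x + 1 ≤ n by omega]
  have hdpn : dp (corrSmallF γ x) n qp = 0 := by
    rw [fd_dp]
    simp only [if_neg (show ¬(n = x ∨ n = x + 1) by omega)]
  have hdp0 : dp (corrSmallF γ x) 0 qp = 0 := by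
    rw [fd_dp]
    simp only [if_neg (show ¬(0 = x ∨ 0 = x + 1) by omega)]
  have hdpp0 := fd_dpp0 γ x hx1 qp
  unfold gen genA sMinus
  rw [hsum1, hsum2, hflip, hdpn, hdp0, hdpp0]
  unfold corrBigF curr neumannLap
  simp only [if_neg (show x ≠ n by omega), if_neg (show x ≠ 0 by omega),
    if_neg (show x + 1 ≠ n by omega), if_neg (show x + 1 ≠ 0 by omega),
    Nat.add_sub_cancel]
  field_simp
  ring

end
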